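/- arXiv:2602.12904 — 7 statements merged into one kernel-verified Lean document; each statement's English description precedes it below -/
import Mathlib

section
/- Fix integers d ≥ 1 and m with m ≥ 2L for a real L > 0, set γ = 2L/(3m), T = (m+1)^d, and equip ℝ^d with the sup metric d_∞(x,y) = max_i |x_i − y_i|. Consider any deterministic full-feedback pricing algorithm, i.e., for each t ∈ {1,…,T} a function π_t : ([0,1]^d)^t × ([0,1]^2)^{t−1} → ℝ mapping the observed contexts x_1,…,x_t and the past valuation pairs (s_1,b_1),…,(s_{t−1},b_{t−1}) to a posted price p_t. Then there exist L-Lipschitz (with respect to d_∞) functions f_s, f_b : [0,1]^d → [0,1] and T pairwise distinct contexts x_1,…,x_T ∈ [0,1]^d such that, with s_t = f_s(x_t), b_t = f_b(x_t) and p_t = π_t(x_1,…,x_t,(s_1,b_1),…,(s_{t−1},b_{t−1})), the cumulative regret satisfies ∑_{t=1}^T ( max(b_t − s_t, 0) − 𝟙(s_t ≤ p_t ≤ b_t)·(b_t − s_t) ) ≥ (L/6)·T^{(d−1)/d}. (Deterministic-algorithm form of the paper's lower bound Theorem 5.1: any algorithm under strong budget balance with d-dimensional contexts and L-Lipschitz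 valuations suffers regret Ω(L·T^{(d−1)/d}), even with full feedback.) -/
/-- base-B digit injectivity -/
lemma my_digit_inj (B : ℕ) (hB : 0 < B) : ∀ (d t t' : ℕ), t < B ^ d → t' < B ^ d →
    (∀ i < d, t / B ^ i % B = t' / B ^ i % B) → t = t' := by
  intro d
  induction d with
  | zero => intro t t' ht ht' _; simp at ht ht'; omega
  | succ n ih =>
    intro t t' ht ht' hdig
    have h0 : t % B = t' % B := by simpa using hdig 0 (Nat.succ_pos n)
    have hq : t / B = t' / B := by
      refine ih (t / B) (t' / B) ?_ ?_ ?_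
      · exact Nat.div_lt_of_lt_mul (by rwa [← pow_succ'] )
      · exact Nat.div_lt_of_lt_mul (by rwa [← pow_succ'] )
      · intro i hi
        have := hdig (i + 1) (by omega)
        simpa [Nat.div_div_eq_div_mul, pow_succ'] using this
    have e1 := Nat.div_add_mod t B
    rw [hq] at e1
    have e2 := Nat.div_add_mod t' B
    omega

noncomputable def mySig (price : (t : ℕ) → (Fin t → Bool) → ℝ) (h : ℝ) (t : ℕ) : Bool :=
  open Classical in
  if 1/2 ≤ price t (fun i => mySig price h i.1) ∧ price t (fun i => mySig price h i.1) ≤ 1/2 + h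
  then true else false
termination_by t
decreasing_by all_goals exact i.2

lemma mySig_true_iff (price : (t : ℕ) → (Fin t → Bool) → ℝ) (h : ℝ) (t : ℕ) :
    mySig price h t = true ↔
      (1/2 ≤ price t (fun i => mySig price h i.1) ∧ price t (fun i => mySig price h i.1) ≤ 1/2 + h) := by
  rw [mySig]
  split <;> simp_all

set_option maxHeartbeats 1000000 in
/-- deterministic-algorithm form of the lower bound, Theorem 5.1.
Contexts live in `[0,1]^d ⊆ Fin d → ℝ`, equipped with the sup metric (the product
metric on `Fin d → ℝ` is exactly `d_∞`).  A deterministic full-feedback algorithm is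
a family `π t` mapping the contexts `x_0, …, x_t` observed so far and the past
valuation pairs `(s_0, b_0), …, (s_{t-1}, b_{t-1})` to a posted price.  For
`T = (m+1)^d` rounds there are `L`-Lipschitz valuation functions `fs, fb` with values
in `[0,1]` and pairwise distinct contexts forcing regret at least
`(L/6) · T^((d-1)/d)`. -/
theorem stmt_0 (d m T : ℕ) (L : ℝ)
    (hd : 1 ≤ d) (hL : 0 < L) (hm : 2 * L ≤ (m : ℝ))
    (hT : T = (m + 1) ^ d)
    (π : (t : ℕ) → (Fin (t + 1) → (Fin d → ℝ)) → (Fin t → ℝ × ℝ) → ℝ) :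
    ∃ (fs fb : (Fin d → ℝ) → ℝ) (x : ℕ → (Fin d → ℝ)),
      (∀ y ∈ Set.Icc (0 : Fin d → ℝ) 1, fs y ∈ Set.Icc (0 : ℝ) 1) ∧
      (∀ y ∈ Set.Icc (0 : Fin d → ℝ) 1, fb y ∈ Set.Icc (0 : ℝ) 1) ∧
      (∀ y ∈ Set.Icc (0 : Fin d → ℝ) 1, ∀ y' ∈ Set.Icc (0 : Fin d → ℝ) 1,
        |fs y - fs y'| ≤ L * dist y y') ∧
      (∀ y ∈ Set.Icc (0 : Fin d → ℝ) 1, ∀ y' ∈ Set.Icc (0 : Fin d → ℝ) 1,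
        |fb y - fb y'| ≤ L * dist y y') ∧
      (∀ t < T, x t ∈ Set.Icc (0 : Fin d → ℝ) 1) ∧
      (∀ t < T, ∀ t' < T, t ≠ t' → x t ≠ x t') ∧
      (L / 6) * (T : ℝ) ^ (((d : ℝ) - 1) / (d : ℝ)) ≤
        ∑ t ∈ Finset.range T,
          (max (fb (x t) - fs (x t)) 0 -
            (if fs (x t) ≤ π t (fun i => x i) (fun i => (fs (x i), fb (x i))) ∧
                π t (fun i => x i) (fun i => (fs (x i), fb (x i))) ≤ fb (x t)
             then fb (x t) - fs (x t) else 0)) := by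
  have hm0 : (0 : ℝ) < m := lt_of_lt_of_le (by linarith) hm
  have hm1 : 1 ≤ m := by
    rcases Nat.eq_zero_or_pos m with h | h
    · subst h; norm_num at hm0
    · exact h
  -- the gap parameter
  set ε : ℝ := L / (4 * m) with hεdef
  have hε0 : 0 < ε := by positivity
  have hε8 : ε ≤ 1 / 8 := by
    rw [hεdef, div_le_div_iff₀ (by positivity) (by norm_num)]
    nlinarith
  -- the grid of contexts
  set x : ℕ → Fin d → ℝ := fun t i => ((t / (m + 1) ^ (i : ℕ) % (m + 1) : ℕ) : ℝ) / m with hxdef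
  have hxmem : ∀ t, x t ∈ Set.Icc (0 : Fin d → ℝ) 1 := by
    intro t
    constructor <;> intro i
    · positivity
    · show ((t / (m + 1) ^ (i : ℕ) % (m + 1) : ℕ) : ℝ) / m ≤ 1
      rw [div_le_one hm0]
      have : t / (m + 1) ^ (i : ℕ) % (m + 1) ≤ m := by
        have := Nat.mod_lt (t / (m + 1) ^ (i : ℕ)) (show 0 < m + 1 by omega)
        omega
      exact_mod_cast this
  have hxdist : ∀ t < T, ∀ t' < T, t ≠ t' → 1 / (m : ℝ) ≤ dist (x t) (x t') := by
    intro t ht t' ht' hne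
    have : ¬ (∀ i < d, t / (m + 1) ^ i % (m + 1) = t' / (m + 1) ^ i % (m + 1)) := by
      intro hall
      exact hne (my_digit_inj (m + 1) (by omega) d t t' (by omega) (by omega) hall)
    push_neg at this
    obtain ⟨i, hi, hdig⟩ := this
    have hco : 1 / (m : ℝ) ≤ dist (x t ⟨i, hi⟩) (x t' ⟨i, hi⟩) := by
      show 1 / (m : ℝ) ≤ dist (((t / (m + 1) ^ i % (m + 1) : ℕ) : ℝ) / m)
        (((t' / (m + 1) ^ i % (m + 1) : ℕ) : ℝ) / m)
      rw [Real.dist_eq, div_sub_div_same, abs_div, abs_of_pos hm0,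
        div_le_div_iff₀ (by positivity) hm0, one_mul]
      have key : ∀ a b : ℕ, a ≠ b → (1 : ℝ) ≤ |(a : ℝ) - (b : ℝ)| := by
        intro a b hab
        have h1 : (1 : ℤ) ≤ |(a : ℤ) - (b : ℤ)| := Int.one_le_abs (by omega)
        have h2 : ((1 : ℤ) : ℝ) ≤ ((|(a : ℤ) - (b : ℤ)| : ℤ) : ℝ) := by exact_mod_cast h1
        push_cast at h2
        exact h2
      nlinarith [key _ _ hdig]
    exact le_trans hco (dist_le_pi_dist (x t) (x t') ⟨i, hi⟩)
  -- the adversary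
  set price : (t : ℕ) → (Fin t → Bool) → ℝ := fun t σp =>
    π t (fun i => x i) (fun i => (if σp i then 1/2 + 2*ε else 1/2,
      (if σp i then 1/2 + 2*ε else 1/2) + ε)) with hpricedef
  set σ : ℕ → Bool := mySig price ε with hσdef
  -- the valuation functions
  set S : Set (Fin d → ℝ) :=
    insert (fun _ => -2) ((fun t => x t) '' {t | t < T ∧ σ t = true}) with hSdef
  set fs : (Fin d → ℝ) → ℝ :=
    fun y => 1/2 + 2*ε * max (1 - 2*(m : ℝ) * Metric.infDist y S) 0 with hfsdef
  set fb : (Fin d → ℝ) → ℝ := fun y => fs y + ε with hfbdef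
  -- bounds on fs
  have hbump : ∀ y : Fin d → ℝ, max (1 - 2*(m : ℝ) * Metric.infDist y S) 0 ∈ Set.Icc (0:ℝ) 1 := by
    intro y
    constructor
    · exact le_max_right _ _
    · refine max_le ?_ (by norm_num)
      nlinarith [Metric.infDist_nonneg (s := S) (x := y), hm0]
  have hfs_bounds : ∀ y : Fin d → ℝ, fs y ∈ Set.Icc (1/2 : ℝ) (1/2 + 2*ε) := by
    intro y
    obtain ⟨h1, h2⟩ := hbump y
    rw [Set.mem_Icc, hfsdef]
    constructor <;> nlinarith
  -- evaluation at grid points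
  have heval : ∀ t < T, fs (x t) = (if σ t then 1/2 + 2*ε else 1/2) := by
    intro t ht
    by_cases hσt : σ t = true
    · have hmem : x t ∈ S := by
        rw [hSdef]
        exact Set.mem_insert_of_mem _ ⟨t, ⟨ht, hσt⟩, rfl⟩
      rw [hfsdef]
      simp only [Metric.infDist_zero_of_mem hmem, hσt, if_true]
      norm_num
    · have hfar : ∀ z ∈ S, 1 / (m : ℝ) ≤ dist (x t) z := by
        intro z hz
        rw [hSdef] at hz
        rcases hz with hz | ⟨t', ⟨ht', hσt'⟩, rfl⟩
        · subst hz
          have i0 : Fin d := ⟨0, by omega⟩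
          have hcoord : (2 : ℝ) ≤ dist (x t i0) ((fun _ : Fin d => (-2:ℝ)) i0) := by
            have h0 : (0:ℝ) ≤ x t i0 := (hxmem t).1 i0
            show (2 : ℝ) ≤ dist (x t i0) (-2 : ℝ)
            rw [Real.dist_eq, abs_of_nonneg (by linarith)]
            linarith
          have := dist_le_pi_dist (x t) (fun _ : Fin d => (-2:ℝ)) i0
          have hm' : 1 / (m : ℝ) ≤ 2 := by
            have h1m : (1:ℝ) ≤ m := by exact_mod_cast hm1
            rw [div_le_iff₀ hm0]; nlinarith
          linarith
        · have hne : t ≠ t' := by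
            intro h; rw [h] at hσt; exact hσt hσt'
          exact hxdist t ht t' ht' hne
      have hinf : 1 / (m : ℝ) ≤ Metric.infDist (x t) S := by
        by_contra hlt
        push_neg at hlt
        have hSne : S.Nonempty := ⟨fun _ => -2, Set.mem_insert _ _⟩
        obtain ⟨z, hzS, hzlt⟩ := (Metric.infDist_lt_iff hSne).mp hlt
        exact absurd (hfar z hzS) (not_le.mpr hzlt)
      have hneg : 1 - 2*(m : ℝ) * Metric.infDist (x t) S ≤ 0 := by
        have h2 : (2 : ℝ) ≤ 2 * (m : ℝ) * Metric.infDist (x t) S := by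
          have := mul_le_mul_of_nonneg_left hinf (by positivity : (0:ℝ) ≤ 2 * m)
          calc (2:ℝ) = 2 * m * (1 / m) := by field_simp
          _ ≤ 2 * (m : ℝ) * Metric.infDist (x t) S := this
        linarith
      simp only [Bool.not_eq_true] at hσt
      simp only [hfsdef, hσt, if_false]
      rw [max_eq_right hneg]
      norm_num
  -- Lipschitz continuity
  have hinf_lip : ∀ y y' : Fin d → ℝ, |Metric.infDist y S - Metric.infDist y' S| ≤ dist y y' := by
    intro y y'
    rw [abs_sub_le_iff]
    constructor
    · linarith [Metric.infDist_le_infDist_add_dist (s := S) (x := y) (y := y')]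
    · have h2 := Metric.infDist_le_infDist_add_dist (s := S) (x := y') (y := y)
      rw [dist_comm] at h2; linarith
  have hfs_lip : ∀ y y' : Fin d → ℝ, |fs y - fs y'| ≤ L * dist y y' := by
    intro y y'
    have key := abs_max_sub_max_le_abs (1 - 2*(m:ℝ)*Metric.infDist y S)
      (1 - 2*(m:ℝ)*Metric.infDist y' S) 0
    have h2 : |(1 - 2*(m:ℝ)*Metric.infDist y S) - (1 - 2*(m:ℝ)*Metric.infDist y' S)|
        ≤ 2*(m:ℝ)*dist y y' := by
      have he : (1 - 2*(m:ℝ)*Metric.infDist y S) - (1 - 2*(m:ℝ)*Metric.infDist y' S)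
          = 2*(m:ℝ)*(Metric.infDist y' S - Metric.infDist y S) := by ring
      rw [he, abs_mul, abs_of_nonneg (by positivity : (0:ℝ) ≤ 2*(m:ℝ))]
      have h3 := hinf_lip y' y
      rw [dist_comm y' y] at h3
      have := mul_le_mul_of_nonneg_left h3 (by positivity : (0:ℝ) ≤ 2*(m:ℝ))
      linarith
    simp only [hfsdef]
    have he2 : 1/2 + 2*ε * max (1 - 2*(m:ℝ)*Metric.infDist y S) 0
        - (1/2 + 2*ε * max (1 - 2*(m:ℝ)*Metric.infDist y' S) 0)
        = 2*ε * (max (1 - 2*(m:ℝ)*Metric.infDist y S) 0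
          - max (1 - 2*(m:ℝ)*Metric.infDist y' S) 0) := by ring
    rw [he2, abs_mul, abs_of_nonneg (by linarith : (0:ℝ) ≤ 2*ε)]
    have hL4 : 2*ε*(2*(m:ℝ)) = L := by rw [hεdef]; field_simp; ring
    calc 2*ε * |max (1 - 2*(m:ℝ)*Metric.infDist y S) 0
          - max (1 - 2*(m:ℝ)*Metric.infDist y' S) 0|
        ≤ 2*ε * (2*(m:ℝ)*dist y y') := by
          have := mul_le_mul_of_nonneg_left (le_trans key h2) (by linarith : (0:ℝ) ≤ 2*ε)
          linarith
      _ = L * dist y y' := by rw [← mul_assoc, hL4]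
  -- distinct contexts
  have hx_ne : ∀ t < T, ∀ t' < T, t ≠ t' → x t ≠ x t' := by
    intro t ht t' ht' hne heq
    have h1 := hxdist t ht t' ht' hne
    rw [heq, dist_self] at h1
    have h2 : (0:ℝ) < 1/m := by positivity
    linarith
  -- per-round regret
  have hterm : ∀ t < T,
      (max (fb (x t) - fs (x t)) 0 -
        (if fs (x t) ≤ π t (fun i => x i) (fun i => (fs (x i), fb (x i))) ∧
            π t (fun i => x i) (fun i => (fs (x i), fb (x i))) ≤ fb (x t)
         then fb (x t) - fs (x t) else 0)) = ε := by
    intro t ht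
    have hpair : (fun i : Fin t => (fs (x i), fb (x i))) =
        (fun i : Fin t => (if σ i.1 then 1/2 + 2*ε else 1/2,
          (if σ i.1 then 1/2 + 2*ε else 1/2) + ε)) := by
      funext i
      have hevi := heval i.1 (lt_trans i.2 ht)
      simp only [hfbdef, hevi]
    have hp : π t (fun i => x i) (fun i => (fs (x i), fb (x i)))
        = price t (fun i : Fin t => mySig price ε i.1) := by
      rw [hpair, hpricedef, hσdef]
    have hiff := mySig_true_iff price ε t
    have hev := heval t ht
    by_cases hσt : σ t = true
    · have hcond := hiff.mp (hσdef ▸ hσt)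
      rw [if_pos hσt] at hev
      simp only [hfbdef]
      rw [hev, hp]
      rw [if_neg (by rintro ⟨h1, h2⟩; linarith [hcond.2])]
      have he : 1/2 + 2*ε + ε - (1/2 + 2*ε) = ε := by ring
      rw [he, max_eq_left hε0.le, sub_zero]
    · simp only [Bool.not_eq_true] at hσt
      have hcond : ¬(1/2 ≤ price t (fun i : Fin t => mySig price ε i.1) ∧
          price t (fun i : Fin t => mySig price ε i.1) ≤ 1/2 + ε) := by
        intro hc
        have := hiff.mpr hc
        rw [← hσdef] at this
        rw [hσt] at this
        exact Bool.false_ne_true this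
      rw [if_neg (by rw [hσt]; exact Bool.false_ne_true)] at hev
      simp only [hfbdef]
      rw [hev, hp, if_neg hcond]
      have he : 1/2 + ε - 1/2 = ε := by ring
      rw [he, max_eq_left hε0.le, sub_zero]
  clear_value S σ price fs fb x ε
  refine ⟨fs, fb, x, ?_, ?_, ?_, ?_, ?_, ?_, ?_⟩
  · intro y _
    obtain ⟨h1, h2⟩ := hfs_bounds y
    exact ⟨by linarith, by linarith⟩
  · intro y _
    obtain ⟨h1, h2⟩ := hfs_bounds y
    simp only [hfbdef]
    exact ⟨by linarith, by linarith⟩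
  · intro y _ y' _
    exact hfs_lip y y'
  · intro y _ y' _
    simp only [hfbdef]
    have he : fs y + ε - (fs y' + ε) = fs y - fs y' := by ring
    rw [he]
    exact hfs_lip y y'
  · exact fun t _ => hxmem t
  · exact hx_ne
  · rw [Finset.sum_congr rfl (fun t ht => hterm t (Finset.mem_range.mp ht)),
      Finset.sum_const, Finset.card_range, nsmul_eq_mul]
    -- now pure arithmetic
    have hd0 : (0:ℝ) < d := by exact_mod_cast hd
    have hTc : (T:ℝ) = ((m:ℝ)+1)^d := by rw [hT]; push_cast; ring
    have hkey : (T:ℝ) ^ (((d:ℝ)-1)/(d:ℝ)) = ((m:ℝ)+1)^(d-1) := by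
      rw [hTc, ← Real.rpow_natCast ((m:ℝ)+1) d, ← Real.rpow_mul (by positivity)]
      have he : (d:ℝ) * (((d:ℝ)-1)/(d:ℝ)) = ((d-1 : ℕ) : ℝ) := by
        rw [Nat.cast_sub hd]
        field_simp
        norm_num
      rw [he, Real.rpow_natCast]
    rw [hkey, hTc]
    have hpow : ((m:ℝ)+1)^d = ((m:ℝ)+1)^(d-1) * ((m:ℝ)+1) := by
      conv_lhs => rw [show d = (d-1) + 1 by omega]
      rw [pow_succ]
    rw [hpow]
    have hfac : (0:ℝ) ≤ ((m:ℝ)+1)^(d-1) := by positivity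
    have hmain : L/6 ≤ ((m:ℝ)+1) * ε := by
      rw [hεdef]
      have he : ((m:ℝ)+1) * (L/(4*m)) = ((m+1)*L)/(4*m) := by ring
      rw [he, div_le_div_iff₀ (by norm_num : (0:ℝ) < 6) (by positivity)]
      nlinarith [hm0, hL]
    calc L/6 * ((m:ℝ)+1)^(d-1) ≤ (((m:ℝ)+1) * ε) * ((m:ℝ)+1)^(d-1) :=
          mul_le_mul_of_nonneg_right hmain hfac
      _ = ((m:ℝ)+1)^(d-1) * ((m:ℝ)+1) * ε := by ring
end

section
/- Let T ≥ 1 be an integer and γ > 0. Define the two valuation pairs (s_0, b_0) = (1/2 − γ, 1/2 − γ/2) and (s_1, b_1) = (1/2 + γ/2, 1/2 + γ). For each t ∈ {1,…,T} let π_t : (ℝ × ℝ)^{t−1} → ℝ be an arbitrary function (a deterministic full-feedback algorithm), and for each binary vector h ∈ {0,1}^T define recursively the prices p_t(h) = π_t((s_{h_1}, b_{h_1}), …, (s_{h_{t−1}}, b_{h_{t−1}})). Then the average regret over all 2^T binary vectors satisfies 2^{−T} · ∑_{h ∈ {0,1}^T} ∑_{t=1}^T [ (b_{h_t} − s_{h_t})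 − 𝟙(s_{h_t} ≤ p_t(h) ≤ b_{h_t})·(b_{h_t} − s_{h_t}) ] ≥ T·γ/4. -/
/-- core of the Yao's-minimax lower-bound argument.
Rounds are indexed by `Fin T`; `π t` is a deterministic full-feedback algorithm,
mapping the `t` past valuation pairs to a price.  Averaged uniformly over all `2^T`
binary vectors `h : Fin T → Bool`, the cumulative regret is at least `T·γ/4`. -/
theorem stmt_1 (T : ℕ) (hT : 1 ≤ T) (γ : ℝ) (hγ : 0 < γ)
    (π : (t : ℕ) → (Fin t → ℝ × ℝ) → ℝ) :
    let sv : Bool → ℝ := fun h => if h then 1 / 2 + γ / 2 else 1 / 2 - γ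
    let bv : Bool → ℝ := fun h => if h then 1 / 2 + γ else 1 / 2 - γ / 2
    let p : (Fin T → Bool) → Fin T → ℝ := fun h t =>
      π t (fun i => (sv (h ⟨i.1, i.2.trans t.2⟩), bv (h ⟨i.1, i.2.trans t.2⟩)))
    (T : ℝ) * γ / 4 ≤
      (1 / 2 ^ T) * ∑ h : Fin T → Bool, ∑ t : Fin T,
        ((bv (h t) - sv (h t)) -
          (if sv (h t) ≤ p h t ∧ p h t ≤ bv (h t) then bv (h t) - sv (h t) else 0)) := by
  intro sv bv p
  -- the per-round regret
  set F : (Fin T → Bool) → Fin T → ℝ := fun h t =>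
    ((bv (h t) - sv (h t)) -
      (if sv (h t) ≤ p h t ∧ p h t ≤ bv (h t) then bv (h t) - sv (h t) else 0)) with hF
  -- key pointwise fact: for any price q, the two regrets sum to ≥ γ/2
  have key : ∀ q : ℝ, γ / 2 ≤
      ((bv true - sv true) - (if sv true ≤ q ∧ q ≤ bv true then bv true - sv true else 0)) +
      ((bv false - sv false) - (if sv false ≤ q ∧ q ≤ bv false then bv false - sv false else 0)) := by
    intro q
    simp only [sv, bv, if_true, if_false, Bool.false_eq_true]
    split_ifs with h1 h2 h2
    · exact absurd h2 (by push_neg; intro h; linarith [h1.1])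
    · linarith
    · linarith
    · linarith
  -- main bound on the double sum
  have main : (2 : ℝ) ^ T * ((T : ℝ) * γ / 4) ≤
      ∑ h : Fin T → Bool, ∑ t : Fin T, F h t := by
    rw [Finset.sum_comm]
    have pert : ∀ t : Fin T, (2 : ℝ) ^ T * (γ / 4) ≤ ∑ h : Fin T → Bool, F h t := by
      intro t
      set flip : (Fin T → Bool) → (Fin T → Bool) := fun h => Function.update h t (!h t) with hflip
      have finv : Function.Involutive flip := by
        intro h
        funext i
        by_cases hi : i = t
        · subst hi; simp [flip]
        · simp [flip, Function.update_of_ne hi]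
      have hpflip : ∀ h, p (flip h) t = p h t := by
        intro h
        simp only [p]
        congr 1
        funext i
        have : (⟨i.1, i.2.trans t.2⟩ : Fin T) ≠ t := by
          intro e
          have := congrArg Fin.val e
          simp at this
          omega
        rw [hflip]
        simp [Function.update_of_ne this]
      have hsum : ∑ h : Fin T → Bool, F h t = ∑ h : Fin T → Bool, F (flip h) t :=
        (Fintype.sum_bijective flip finv.bijective _ _ (fun h => rfl)).symm
      have two_mul : (2 : ℝ) ^ T * (γ / 2) ≤ 2 * ∑ h : Fin T → Bool, F h t := by
        have : 2 * ∑ h : Fin T → Bool, F h t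
            = ∑ h : Fin T → Bool, (F h t + F (flip h) t) := by
          rw [Finset.sum_add_distrib, ← hsum]; ring
        rw [this]
        have hconst : ∑ _h : Fin T → Bool, (γ / 2) = (2:ℝ) ^ T * (γ / 2) := by
          rw [Finset.sum_const]
          simp [Fintype.card_fun]
        rw [← hconst]
        apply Finset.sum_le_sum
        intro h _
        have hflipt : flip h t = !h t := by simp [flip]
        have := key (p h t)
        rw [hF]
        simp only [hpflip, hflipt]
        cases hht : h t
        · simpa using (by linarith : γ / 2 ≤
            ((bv false - sv false) - (if sv false ≤ p h t ∧ p h t ≤ bv false then bv false - sv false else 0)) +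
            ((bv true - sv true) - (if sv true ≤ p h t ∧ p h t ≤ bv true then bv true - sv true else 0)))
        · simpa using this
      linarith
    calc (2 : ℝ) ^ T * ((T : ℝ) * γ / 4)
        = ∑ _t : Fin T, (2 : ℝ) ^ T * (γ / 4) := by
          rw [Finset.sum_const]; simp; ring
      _ ≤ ∑ t : Fin T, ∑ h : Fin T → Bool, F h t := Finset.sum_le_sum fun t _ => pert t
  have h2 : (0 : ℝ) < 2 ^ T := by positivity
  have : (T : ℝ) * γ / 4 = (1 / 2 ^ T) * ((2:ℝ) ^ T * ((T : ℝ) * γ / 4)) := by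
    field_simp
  rw [this]
  exact mul_le_mul_of_nonneg_left main (by positivity)
end

section
/- Let d ≥ 1 be an integer, L > 0, ℓ ≥ 1 an integer, and equip ℝ^d with the sup metric d_∞(x,y) = max_i |x_i − y_i|. Let f_s, f_b : [0,1]^d → [0,1] be L-Lipschitz with respect to d_∞. Let R ⊆ R' ⊆ [0,1]^d be sets with d_∞-diameter of R' at most 2^{−(ℓ−1)} and d_∞-diameter of R at most 2^{−ℓ}. Suppose there exist x̄ ∈ R' and p̄ ∈ [0,1] with f_s(x̄) ≤ p̄ ≤ f_b(x̄), and set p_L = max(0, p̄ − L·2^{−(ℓ−1)}) and p_U = min(1, p̄ + L·2^{−(ℓ−1)}). Suppose further there exist x_L, x_U ∈ R such that the trade at price p_L is rejected at x_L (i.e., not f_s(x_L) ≤ p_L ≤ f_b(x_L)) and the trade at price p_U is rejected at x_U (i.e., not f_s(x_U) ≤ p_U ≤ f_b(x_U)). Then for every x ∈ R it holds that f_b(x) − f_s(x) ≤ 6·L·2^{−ℓ}. -/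
/-- Lemma 3.2, content of the `Reduce` routine.
`dist` on `Fin d → ℝ` is the sup metric.  `R ⊆ R' ⊆ [0,1]^d` with `diam R' ≤ 2^{1-ℓ}`
and `diam R ≤ 2^{-ℓ}`; the parent price `pb ∈ [0,1]` was accepted at some `xb ∈ R'`,
and both probe prices `pL = max(0, pb - L·2^{1-ℓ})`, `pU = min(1, pb + L·2^{1-ℓ})`
were rejected at contexts `xL, xU ∈ R`.  Then `fb x - fs x ≤ 6·L·2^{-ℓ}` on `R`. -/
theorem stmt_5 (d : ℕ) (hd : 1 ≤ d) (L : ℝ) (hL : 0 < L) (ℓ : ℕ) (hℓ : 1 ≤ ℓ)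
    (fs fb : (Fin d → ℝ) → ℝ)
    (hrange : ∀ x ∈ Set.Icc (0 : Fin d → ℝ) 1,
      fs x ∈ Set.Icc (0 : ℝ) 1 ∧ fb x ∈ Set.Icc (0 : ℝ) 1)
    (hlip : ∀ x ∈ Set.Icc (0 : Fin d → ℝ) 1, ∀ y ∈ Set.Icc (0 : Fin d → ℝ) 1,
      |fs x - fs y| ≤ L * dist x y ∧ |fb x - fb y| ≤ L * dist x y)
    (R R' : Set (Fin d → ℝ)) (hRR' : R ⊆ R') (hR'cube : R' ⊆ Set.Icc 0 1)
    (hdiamR' : ∀ x ∈ R', ∀ y ∈ R', dist x y ≤ (2 : ℝ) ^ (1 - (ℓ : ℤ)))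
    (hdiamR : ∀ x ∈ R, ∀ y ∈ R, dist x y ≤ (2 : ℝ) ^ (-(ℓ : ℤ)))
    (xb : Fin d → ℝ) (hxb : xb ∈ R') (pb : ℝ) (hpb : pb ∈ Set.Icc (0 : ℝ) 1)
    (hacc : fs xb ≤ pb ∧ pb ≤ fb xb)
    (pL pU : ℝ)
    (hpL : pL = max 0 (pb - L * (2 : ℝ) ^ (1 - (ℓ : ℤ))))
    (hpU : pU = min 1 (pb + L * (2 : ℝ) ^ (1 - (ℓ : ℤ))))
    (xL xU : Fin d → ℝ) (hxL : xL ∈ R) (hxU : xU ∈ R)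
    (hrejL : ¬(fs xL ≤ pL ∧ pL ≤ fb xL))
    (hrejU : ¬(fs xU ≤ pU ∧ pU ≤ fb xU)) :
    ∀ x ∈ R, fb x - fs x ≤ 6 * L * (2 : ℝ) ^ (-(ℓ : ℤ)) := by

  intro x hx
  have hxc : x ∈ Set.Icc (0 : Fin d → ℝ) 1 := hR'cube (hRR' hx)
  have hxLc : xL ∈ Set.Icc (0 : Fin d → ℝ) 1 := hR'cube (hRR' hxL)
  have hxUc : xU ∈ Set.Icc (0 : Fin d → ℝ) 1 := hR'cube (hRR' hxU)
  have hxbc : xb ∈ Set.Icc (0 : Fin d → ℝ) 1 := hR'cube hxb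
  set δ : ℝ := (2 : ℝ) ^ (1 - (ℓ : ℤ)) with hδ
  set ε : ℝ := (2 : ℝ) ^ (-(ℓ : ℤ)) with hε
  have hδε : δ = 2 * ε := by
    rw [hδ, hε, show (1 - (ℓ : ℤ)) = 1 + -(ℓ : ℤ) by ring,
      zpow_add₀ (by norm_num : (2:ℝ) ≠ 0), zpow_one]
  have hεpos : 0 < ε := by positivity
  -- Lipschitz consequences
  have hLb : dist xL xb ≤ δ := hdiamR' xL (hRR' hxL) xb hxb
  have hUb : dist xU xb ≤ δ := hdiamR' xU (hRR' hxU) xb hxb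
  have hxxL : dist x xL ≤ ε := hdiamR x hx xL hxL
  have hxxU : dist x xU ≤ ε := hdiamR x hx xU hxU
  -- fb xL ≥ pL, so rejection at xL means fs xL > pL
  have hfbL : pL ≤ fb xL := by
    rw [hpL]
    refine max_le (hrange xL hxLc).2.1 ?_
    have h1 : |fb xL - fb xb| ≤ L * dist xL xb := (hlip xL hxLc xb hxbc).2
    have h2 : L * dist xL xb ≤ L * δ := by
      exact mul_le_mul_of_nonneg_left hLb hL.le
    have := abs_le.mp h1
    linarith [hacc.2]
  have hfsL : pL < fs xL := by
    by_contra h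
    exact hrejL ⟨le_of_not_gt h, hfbL⟩
  -- fs xU ≤ pU, so rejection at xU means fb xU < pU
  have hfsU : fs xU ≤ pU := by
    rw [hpU]
    refine le_min (hrange xU hxUc).1.2 ?_
    have h1 : |fs xU - fs xb| ≤ L * dist xU xb := (hlip xU hxUc xb hxbc).1
    have h2 : L * dist xU xb ≤ L * δ := mul_le_mul_of_nonneg_left hUb hL.le
    have := abs_le.mp h1
    linarith [hacc.1]
  have hfbU : fb xU < pU := by
    by_contra h
    exact hrejU ⟨hfsU, le_of_not_gt h⟩
  -- bounds on pL, pU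
  have hpLlb : pb - L * δ ≤ pL := by rw [hpL]; exact le_max_right _ _
  have hpUub : pU ≤ pb + L * δ := by rw [hpU]; exact min_le_right _ _
  -- Lipschitz at x
  have h1 : |fb x - fb xU| ≤ L * dist x xU := (hlip x hxc xU hxUc).2
  have h2 : |fs x - fs xL| ≤ L * dist x xL := (hlip x hxc xL hxLc).1
  have h3 : L * dist x xU ≤ L * ε := mul_le_mul_of_nonneg_left hxxU hL.le
  have h4 : L * dist x xL ≤ L * ε := mul_le_mul_of_nonneg_left hxxL hL.le
  have e1 := abs_le.mp h1
  have e2 := abs_le.mp h2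
  have : fb x - fs x ≤ (pb + L * δ) - (pb - L * δ) + 2 * (L * ε) := by
    linarith
  rw [hδε] at this
  linarith
end

section
/- Let d ≥ 1 be an integer, L > 0, ℓ ≥ 1 an integer, and equip ℝ^d with the sup metric d_∞(x,y) = max_i |x_i − y_i|. Let f_s, f_b : [0,1]^d → [0,1] be L-Lipschitz with respect to d_∞. Let R ⊆ R' ⊆ [0,1]^d be sets with d_∞-diameter of R' at most 2^{−(ℓ−1)} and d_∞-diameter of R at most 2^{−ℓ}. Suppose there exist x̄ ∈ R' and p̄ ∈ [0,1] with f_s(x̄) ≤ p̄ ≤ f_b(x̄). Let L̃ be a real with L ≤ L̃ ≤ 2L, and set p_L = max(0, p̄ − L̃·2^{−(ℓ−1)}) and p_U = min(1, p̄ + L̃·2^{−(ℓ−1)}). Suppose there exist x_L, x_U ∈ R such that not f_s(x_L) ≤ p_L ≤ f_b(x_L) and not f_s(x_U) ≤ p_U ≤ f_b(x_U). Then for every x ∈ R it holds that f_b(x) − f_s(x) ≤ 10·L·2^{−ℓ}. -/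
/-- claim underlying the `GeometricReduce` routine.
Same setting as the `Reduce` lemma, but the probe prices are built at a scale
`Lt` with `L ≤ Lt ≤ 2L`; a rejection of each of the two probe prices at contexts
in `R` bounds the gain from trade on `R` by `10·L·2^{-ℓ}`. -/
theorem stmt_6 (d : ℕ) (hd : 1 ≤ d) (L : ℝ) (hL : 0 < L) (ℓ : ℕ) (hℓ : 1 ≤ ℓ)
    (fs fb : (Fin d → ℝ) → ℝ)
    (hrange : ∀ x ∈ Set.Icc (0 : Fin d → ℝ) 1,
      fs x ∈ Set.Icc (0 : ℝ) 1 ∧ fb x ∈ Set.Icc (0 : ℝ) 1)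
    (hlip : ∀ x ∈ Set.Icc (0 : Fin d → ℝ) 1, ∀ y ∈ Set.Icc (0 : Fin d → ℝ) 1,
      |fs x - fs y| ≤ L * dist x y ∧ |fb x - fb y| ≤ L * dist x y)
    (R R' : Set (Fin d → ℝ)) (hRR' : R ⊆ R') (hR'cube : R' ⊆ Set.Icc 0 1)
    (hdiamR' : ∀ x ∈ R', ∀ y ∈ R', dist x y ≤ (2 : ℝ) ^ (1 - (ℓ : ℤ)))
    (hdiamR : ∀ x ∈ R, ∀ y ∈ R, dist x y ≤ (2 : ℝ) ^ (-(ℓ : ℤ)))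
    (xb : Fin d → ℝ) (hxb : xb ∈ R') (pb : ℝ) (hpb : pb ∈ Set.Icc (0 : ℝ) 1)
    (hacc : fs xb ≤ pb ∧ pb ≤ fb xb)
    (Lt : ℝ) (hLt : L ≤ Lt) (hLt2 : Lt ≤ 2 * L)
    (pL pU : ℝ)
    (hpL : pL = max 0 (pb - Lt * (2 : ℝ) ^ (1 - (ℓ : ℤ))))
    (hpU : pU = min 1 (pb + Lt * (2 : ℝ) ^ (1 - (ℓ : ℤ))))
    (xL xU : Fin d → ℝ) (hxL : xL ∈ R) (hxU : xU ∈ R)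
    (hrejL : ¬(fs xL ≤ pL ∧ pL ≤ fb xL))
    (hrejU : ¬(fs xU ≤ pU ∧ pU ≤ fb xU)) :
    ∀ x ∈ R, fb x - fs x ≤ 10 * L * (2 : ℝ) ^ (-(ℓ : ℤ)) := by

  intro x hx
  have hδ : (2 : ℝ) ^ (1 - (ℓ : ℤ)) = 2 * (2 : ℝ) ^ (-(ℓ : ℤ)) := by
    rw [sub_eq_add_neg, zpow_add₀ (two_ne_zero), zpow_one]
  set ε : ℝ := (2 : ℝ) ^ (-(ℓ : ℤ)) with hεdef
  have hεpos : (0 : ℝ) < ε := by positivity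
  have hxc : x ∈ Set.Icc (0 : Fin d → ℝ) 1 := hR'cube (hRR' hx)
  have hxLc : xL ∈ Set.Icc (0 : Fin d → ℝ) 1 := hR'cube (hRR' hxL)
  have hxUc : xU ∈ Set.Icc (0 : Fin d → ℝ) 1 := hR'cube (hRR' hxU)
  have hxbc : xb ∈ Set.Icc (0 : Fin d → ℝ) 1 := hR'cube hxb
  have dLx : dist xL x ≤ ε := hdiamR _ hxL _ hx
  have dUx : dist xU x ≤ ε := hdiamR _ hxU _ hx
  have dbL : dist xb xL ≤ 2 * ε := by
    have := hdiamR' _ hxb _ (hRR' hxL); rwa [hδ] at this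
  have dbU : dist xb xU ≤ 2 * ε := by
    have := hdiamR' _ hxb _ (hRR' hxU); rwa [hδ] at this
  obtain ⟨h1s, h1b⟩ := hlip xL hxLc x hxc
  obtain ⟨h2s, h2b⟩ := hlip xU hxUc x hxc
  obtain ⟨h3s, h3b⟩ := hlip xb hxbc xL hxLc
  obtain ⟨h4s, h4b⟩ := hlip xb hxbc xU hxUc
  rw [abs_le] at h1s h1b h2s h2b h3s h3b h4s h4b
  obtain ⟨⟨hsL0, hsL1⟩, ⟨hbL0, hbL1⟩⟩ := hrange xL hxLc
  obtain ⟨⟨hsU0, hsU1⟩, ⟨hbU0, hbU1⟩⟩ := hrange xU hxUc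
  have hmul1 : L * dist xb xL ≤ L * (2 * ε) := mul_le_mul_of_nonneg_left dbL hL.le
  have hmul2 : L * dist xb xU ≤ L * (2 * ε) := mul_le_mul_of_nonneg_left dbU hL.le
  have hmul3 : L * dist xL x ≤ L * ε := mul_le_mul_of_nonneg_left dLx hL.le
  have hmul4 : L * dist xU x ≤ L * ε := mul_le_mul_of_nonneg_left dUx hL.le
  have hLtε : 0 ≤ (Lt - L) * ε := mul_nonneg (sub_nonneg.mpr hLt) hεpos.le
  have hLtε2 : 0 ≤ (2 * L - Lt) * ε := mul_nonneg (sub_nonneg.mpr hLt2) hεpos.le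
  have hpLle : pL ≤ fb xL := by
    rw [hpL, hδ]
    apply max_le hbL0
    linarith [hacc.2, h3b.2, hmul1, hLtε]
  have hpUge : fs xU ≤ pU := by
    rw [hpU, hδ]
    apply le_min hsU1
    linarith [hacc.1, h4s.1, hmul2, hLtε]
  have hfsL : pL < fs xL := by
    by_contra h
    push_neg at h
    exact hrejL ⟨h, hpLle⟩
  have hfbU : fb xU < pU := by
    by_contra h
    push_neg at h
    exact hrejU ⟨hpUge, h⟩
  have hpLlb : pb - Lt * (2 * ε) ≤ pL := by
    rw [hpL, hδ]; exact le_max_right _ _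
  have hpUub : pU ≤ pb + Lt * (2 * ε) := by
    rw [hpU, hδ]; exact min_le_right _ _
  linarith [h1s.2, h2b.1, hfsL, hfbU, hpLlb, hpUub, hmul3, hmul4, hLtε2]
end

section
/- Let d ≥ 1, L > 0, h > 0, ε > 0, and equip ℝ^d with the sup metric d_∞(x,y) = max_i |x_i − y_i|. Let f_s, f_b : ℝ^d → ℝ be L-Lipschitz with respect to d_∞ and taking values in [0,1]. Suppose x̄, x ∈ ℝ^d satisfy d_∞(x, x̄) ≤ h, there is a price p̄ with f_s(x̄) ≤ p̄ ≤ f_b(x̄), and f_b(x) − f_s(x) ≥ ε. Let P be the projected ε-grid of [p̄ − L·h, p̄ + L·h], namely P = { clamp(p̄ − L·h + k·ε) : k ∈ ℕ, k ≤ ⌊2Lh/ε⌋ } ∪ { clamp(p̄ + L·h) }, where clamp(y) = min(1, max(0, y)). Then there exists p ∈ P with f_s(x) ≤ p ≤ f_b(x). -/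
lemma clamp_between {s b t : ℝ} (hs0 : 0 ≤ s) (hb1 : b ≤ 1) (h1 : s ≤ t) (h2 : t ≤ b) :
    s ≤ min 1 (max 0 t) ∧ min 1 (max 0 t) ≤ b := by
  constructor
  · exact le_min (h1.trans (h2.trans hb1)) (h1.trans (le_max_right 0 t))
  · exact (min_le_right 1 _).trans (max_le (hs0.trans (h1.trans h2)) h2)

/-- claim underlying the `Guess` routine.
`dist` on `Fin d → ℝ` is the sup metric.  If a price `pb` was accepted at a context
`xb` within sup-distance `h` of `x` and the gain from trade at `x` is at least `ε`,
then the projected `ε`-grid of `[pb - L·h, pb + L·h]` (each point clamped to `[0,1]`)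
contains a price accepted by the valuations at `x`. -/
theorem stmt_8 (d : ℕ) (hd : 1 ≤ d) (L h ε : ℝ) (hL : 0 < L) (hh : 0 < h) (hε : 0 < ε)
    (fs fb : (Fin d → ℝ) → ℝ)
    (hfs : ∀ x y, |fs x - fs y| ≤ L * dist x y)
    (hfb : ∀ x y, |fb x - fb y| ≤ L * dist x y)
    (hrange : ∀ x, fs x ∈ Set.Icc (0 : ℝ) 1 ∧ fb x ∈ Set.Icc (0 : ℝ) 1)
    (xb x : Fin d → ℝ) (hdist : dist x xb ≤ h)
    (pb : ℝ) (hacc : fs xb ≤ pb ∧ pb ≤ fb xb)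
    (hgap : ε ≤ fb x - fs x) :
    ∃ p ∈ ({q : ℝ | ∃ k : ℕ, k ≤ ⌊2 * L * h / ε⌋₊ ∧
            q = min 1 (max 0 (pb - L * h + k * ε))} ∪
          {min 1 (max 0 (pb + L * h))}),
      fs x ≤ p ∧ p ≤ fb x := by
  obtain ⟨hs0, hs1⟩ := (hrange x).1
  obtain ⟨hb0, hb1⟩ := (hrange x).2
  have hLd : L * dist x xb ≤ L * h :=
    mul_le_mul_of_nonneg_left hdist hL.le
  have habs1 := abs_le.mp (hfs x xb)
  have habs2 := abs_le.mp (hfb x xb)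
  have h1 : fs x ≤ pb + L * h := by linarith [habs1.2, hacc.1]
  have h2 : pb - L * h ≤ fb x := by linarith [habs2.1, hacc.2]
  by_cases hca : fs x ≤ pb - L * h
  · -- take k = 0
    have hc := clamp_between hs0 hb1 hca h2
    refine ⟨min 1 (max 0 (pb - L * h)), Or.inl ⟨0, Nat.zero_le _, by push_cast; ring_nf⟩,
      hc.1, hc.2⟩
  · push_neg at hca
    by_cases hcb : pb + L * h ≤ fb x
    · -- take the extra right endpoint
      have hc := clamp_between hs0 hb1 h1 hcb
      exact ⟨min 1 (max 0 (pb + L * h)), Or.inr rfl, hc.1, hc.2⟩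
    · push_neg at hcb
      set a := pb - L * h with ha
      set k := ⌈(fs x - a) / ε⌉₊ with hk
      have hpos : 0 ≤ (fs x - a) / ε := div_nonneg (by linarith) hε.le
      have hle : fs x ≤ a + k * ε := by
        have := Nat.le_ceil ((fs x - a) / ε)
        rw [div_le_iff₀ hε] at this
        linarith
      have hlt : a + k * ε < fb x := by
        have := Nat.ceil_lt_add_one hpos
        rw [← hk, show (fs x - a) / ε + 1 = (fs x - a + ε) / ε by field_simp,
          lt_div_iff₀ hε] at this
        linarith
      have hkle : k ≤ ⌊2 * L * h / ε⌋₊ := by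
        apply Nat.le_floor
        rw [le_div_iff₀ hε]
        nlinarith
      have hc := clamp_between hs0 hb1 hle hlt.le
      exact ⟨min 1 (max 0 (a + k * ε)), Or.inl ⟨k, hkle, rfl⟩, hc.1, hc.2⟩
end

section
/- Let ε > 0 and let a ≤ b, s, b' be real numbers with 0 ≤ s, b' ≤ 1, b' − s ≥ ε, s ≤ b, and a ≤ b'. Let P = { clamp(a + k·ε) : k ∈ ℕ, k ≤ ⌊(b−a)/ε⌋ } ∪ { clamp(b) }, where clamp(y) = min(1, max(0, y)). Then there exists p ∈ P with s ≤ p ≤ b'. -/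
/-- the projected `ε`-grid hits long acceptance intervals.
The projected `ε`-grid of `[a,b]` is `{a, a+ε, …, a+⌊(b-a)/ε⌋·ε, b}` with every
point clamped to `[0,1]` via `clamp y = min 1 (max 0 y)`.  It contains a point of
any interval `[s, b'] ⊆ [0,1]` of length at least `ε` with `s ≤ b` and `a ≤ b'`. -/
theorem stmt_9 (ε a b s b' : ℝ) (hε : 0 < ε) (hab : a ≤ b)
    (hs0 : 0 ≤ s) (hs1 : s ≤ 1) (hb'0 : 0 ≤ b') (hb'1 : b' ≤ 1)
    (hgap : ε ≤ b' - s) (hsb : s ≤ b) (hab' : a ≤ b') :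
    ∃ p ∈ ({q : ℝ | ∃ k : ℕ, k ≤ ⌊(b - a) / ε⌋₊ ∧
            q = min 1 (max 0 (a + k * ε))} ∪ {min 1 (max 0 b)}),
      s ≤ p ∧ p ≤ b' := by
  rcases le_or_gt b b' with hbb' | hbb'
  · refine ⟨min 1 (max 0 b), Or.inr rfl, le_min hs1 (le_max_of_le_right hsb), ?_⟩
    exact (min_le_right _ _).trans (max_le hb'0 hbb')
  · rcases le_or_gt s a with hsa | hsa
    · refine ⟨min 1 (max 0 (a + (0 : ℕ) * ε)), Or.inl ⟨0, Nat.zero_le _, rfl⟩, ?_, ?_⟩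
      · have : min 1 (max 0 (a + (0 : ℕ) * ε)) = a := by
          push_cast; rw [zero_mul, add_zero, max_eq_right (hs0.trans hsa),
            min_eq_right (hab'.trans hb'1)]
        rw [this]; exact hsa
      · have : min 1 (max 0 (a + (0 : ℕ) * ε)) = a := by
          push_cast; rw [zero_mul, add_zero, max_eq_right (hs0.trans hsa),
            min_eq_right (hab'.trans hb'1)]
        rw [this]; exact hab'
    · set k : ℕ := ⌈(s - a) / ε⌉₊ with hk
      have hx0 : 0 ≤ (s - a) / ε := div_nonneg (by linarith) hε.le
      have h1 : s ≤ a + k * ε := by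
        have := Nat.le_ceil ((s - a) / ε)
        have : s - a ≤ k * ε := by
          rw [div_le_iff₀ hε] at this; exact this
        linarith
      have h2 : a + k * ε ≤ b' := by
        have := Nat.ceil_lt_add_one hx0
        have hlt : (k : ℝ) * ε < s - a + ε := by
          have h := (mul_lt_mul_of_pos_right this hε)
          rw [add_mul, div_mul_cancel₀ _ hε.ne', one_mul] at h
          exact h
        linarith
      have h01 : 0 ≤ a + k * ε := le_trans hs0 h1
      have h11 : a + k * ε ≤ 1 := h2.trans hb'1
      have hkf : k ≤ ⌊(b - a) / ε⌋₊ := by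
        apply Nat.le_floor
        rw [le_div_iff₀ hε]
        have : a + k * ε ≤ b := h2.trans hbb'.le
        linarith
      refine ⟨min 1 (max 0 (a + k * ε)), Or.inl ⟨k, hkf, rfl⟩, ?_, ?_⟩
      · rw [max_eq_right h01, min_eq_right h11]; exact h1
      · rw [max_eq_right h01, min_eq_right h11]; exact h2
end

section
/- Let N ≥ 1 be an integer. For every integer s ≥ N, let k(s) be the unique natural number with 2^{k(s)}·N ≤ s < 2^{k(s)+1}·N, and set q_s = 1/(2^{k(s)}·N) ∈ (0, 1]. Then ∑_{i=0}^{∞} ∏_{m=0}^{i−1} (1 − q_{N+m}) ≤ 4·N. (The left-hand side is the expected hitting time of the absorbing state 0 for the Markov chain on {0} ∪ {N, N+1, N+2, …} started at N which, from each state s ≥ N, moves to s + 1 with probability 1 − q_s and jumps to 0 with probability q_s.) -/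
open Finset

lemma aux_pow_bound (n : ℕ) (hn : 1 ≤ n) : ((1 : ℝ) - 1 / n) ^ n ≤ 3 / 8 := by
  have hn' : (1 : ℝ) ≤ (n : ℝ) := by exact_mod_cast hn
  have hn0 : (0 : ℝ) < n := by linarith
  have h1 : (0:ℝ) ≤ 1 - 1 / n := by
    have : 1 / (n:ℝ) ≤ 1 := by rw [div_le_one hn0]; exact hn'
    linarith
  have h2 : (1:ℝ) - 1 / n ≤ Real.exp (-(1 / n)) := by
    have := Real.add_one_le_exp (-(1 / (n:ℝ)))
    linarith
  have h3 : ((1:ℝ) - 1 / n) ^ n ≤ Real.exp (-(1 / n)) ^ n :=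
    pow_le_pow_left₀ h1 h2 n
  have h4 : Real.exp (-(1 / (n:ℝ))) ^ n = Real.exp (-1) := by
    rw [← Real.exp_nat_mul]
    congr 1
    field_simp
  have h5 : Real.exp (-1) ≤ 3 / 8 := by
    rw [Real.exp_neg]
    have h := Real.exp_one_gt_d9
    have h83 : (8/3 : ℝ) ≤ Real.exp 1 := by norm_num at h ⊢; linarith
    have := inv_anti₀ (by norm_num : (0:ℝ) < 8/3) h83
    norm_num at this
    linarith
  calc ((1:ℝ) - 1 / n) ^ n ≤ Real.exp (-(1 / n)) ^ n := h3
    _ = Real.exp (-1) := h4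
    _ ≤ 3/8 := h5



/-- Markov-chain hitting-time bound, Claim C.2.
For `s ≥ N`, `k s` is the unique natural number with `2^{k s}·N ≤ s < 2^{k s + 1}·N`
and `q s = 1/(2^{k s}·N)`.  The expected hitting time of the absorbing state `0` for
the chain started at `N` that jumps from `s` to `0` with probability `q s` and to
`s+1` otherwise equals `∑_{i≥0} ∏_{m<i} (1 - q (N+m))`, and is at most `4·N`. -/
theorem stmt_12 (N : ℕ) (hN : 1 ≤ N) (k : ℕ → ℕ)
    (hk : ∀ s : ℕ, N ≤ s → 2 ^ k s * N ≤ s ∧ s < 2 ^ (k s + 1) * N) :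
    let q : ℕ → ℝ := fun s => 1 / ((2 : ℝ) ^ k s * (N : ℝ))
    Summable (fun i : ℕ => ∏ m ∈ Finset.range i, (1 - q (N + m))) ∧
      ∑' i : ℕ, ∏ m ∈ Finset.range i, (1 - q (N + m)) ≤ 4 * (N : ℝ) := by
  intro q
  have hq : ∀ s, q s = 1 / ((2 : ℝ) ^ k s * (N : ℝ)) := fun s => rfl
  have hNpos : (0 : ℝ) < N := by exact_mod_cast hN
  set P : ℕ → ℝ := fun i => ∏ m ∈ Finset.range i, (1 - q (N + m)) with hP
  -- uniqueness of the block index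
  have huniq : ∀ a b s : ℕ, 2 ^ a * N ≤ s → s < 2 ^ (a+1) * N →
      2 ^ b * N ≤ s → s < 2 ^ (b+1) * N → a = b := by
    intro a b s ha1 ha2 hb1 hb2
    by_contra h
    rcases Nat.lt_or_ge a b with hab | hab
    · have : 2 ^ (a+1) * N ≤ 2 ^ b * N :=
        Nat.mul_le_mul_right _ (Nat.pow_le_pow_right (by norm_num) hab)
      omega
    · have hba : b < a := by omega
      have : 2 ^ (b+1) * N ≤ 2 ^ a * N :=
        Nat.mul_le_mul_right _ (Nat.pow_le_pow_right (by norm_num) hba)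
      omega
  -- the value of k on block c
  have hκ : ∀ c m : ℕ, m < 2 ^ c * N → k (2 ^ c * N + m) = c := by
    intro c m hm
    have hs : N ≤ 2 ^ c * N + m := le_add_right (Nat.le_mul_of_pos_left _ (Nat.two_pow_pos c))
    obtain ⟨h1, h2⟩ := hk _ hs
    exact huniq _ _ _ h1 h2 (Nat.le_add_right _ _)
      (by rw [pow_succ, mul_comm (2^c) 2, two_mul, add_mul]; omega)
  -- the factor bounds
  have hq01 : ∀ s : ℕ, 0 < q s ∧ q s ≤ 1 := by
    intro s
    have h2 : (1:ℝ) ≤ (2:ℝ) ^ k s * N := by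
      have h1 : (1:ℝ) ≤ (2:ℝ) ^ k s := one_le_pow₀ (by norm_num)
      nlinarith [hNpos, hN, h1, show (1:ℝ) ≤ (N:ℝ) by exact_mod_cast hN]
    constructor
    · rw [hq]; positivity
    · rw [hq]; rw [div_le_one (by linarith)]; linarith
  have hfac0 : ∀ s : ℕ, 0 ≤ 1 - q s := fun s => by have := (hq01 s).2; linarith
  have hfac1 : ∀ s : ℕ, 1 - q s ≤ 1 := fun s => by have := (hq01 s).1; linarith
  have hPnonneg : ∀ i, 0 ≤ P i := fun i => Finset.prod_nonneg (fun m _ => hfac0 _)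
  have hPmono : ∀ j i : ℕ, j ≤ i → P i ≤ P j := by
    intro j i hji
    obtain ⟨d, rfl⟩ := Nat.exists_eq_add_of_le hji
    rw [hP]
    simp only
    rw [Finset.prod_range_add]
    have h1 : ∏ m ∈ Finset.range d, (1 - q (N + (j + m))) ≤ 1 :=
      Finset.prod_le_one (fun m _ => hfac0 _) (fun m _ => hfac1 _)
    have h0 : 0 ≤ ∏ m ∈ Finset.range j, (1 - q (N + m)) :=
      Finset.prod_nonneg (fun m _ => hfac0 _)
    exact mul_le_of_le_one_right h0 h1
  -- block starts
  set B : ℕ → ℕ := fun c => (2 ^ c - 1) * N with hB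
  have hBN : ∀ c, B c + N = 2 ^ c * N := by
    intro c
    have h1 : 1 ≤ 2 ^ c := Nat.one_le_two_pow
    rw [hB]; simp only
    rw [Nat.sub_mul, one_mul]
    have h2 : N ≤ 2 ^ c * N := Nat.le_mul_of_pos_left _ (by positivity)
    omega
  have hBsucc : ∀ c, B (c+1) = B c + 2 ^ c * N := by
    intro c
    have h1 : 1 ≤ 2 ^ c := Nat.one_le_two_pow
    rw [hB]; simp only
    rw [pow_succ]
    rw [Nat.sub_mul, Nat.sub_mul, one_mul]
    have h2 : N ≤ 2^c * N := Nat.le_mul_of_pos_left _ (by positivity)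
    have h3 : 2 ^ c * 2 * N = 2 ^ c * N + 2 ^ c * N := by ring
    omega
  -- product over a full block
  have hblockprod : ∀ c : ℕ, ∏ m ∈ Finset.range (2 ^ c * N), (1 - q (N + (B c + m))) ≤ 3/8 := by
    intro c
    have hcast : ∀ m ∈ Finset.range (2 ^ c * N),
        (1 - q (N + (B c + m))) = 1 - 1 / ((2 ^ c * N : ℕ) : ℝ) := by
      intro m hm
      rw [Finset.mem_range] at hm
      have : N + (B c + m) = 2 ^ c * N + m := by rw [← add_assoc, add_comm N (B c), hBN]
      rw [this, hq, hκ c m hm]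
      push_cast
      ring_nf
    rw [Finset.prod_congr rfl hcast, Finset.prod_const, Finset.card_range]
    exact aux_pow_bound _ (Nat.mul_pos (Nat.two_pow_pos c) hN)
  -- P at block starts
  have hPstart : ∀ c : ℕ, P (B c) ≤ (3/8 : ℝ) ^ c := by
    intro c
    induction c with
    | zero =>
      have : B 0 = 0 := by rw [hB]; simp
      rw [this]
      simp [hP]
    | succ c ih =>
      have h1 : P (B (c+1)) = P (B c) * ∏ m ∈ Finset.range (2 ^ c * N), (1 - q (N + (B c + m))) := by
        rw [hBsucc c, hP]
        simp only
        rw [Finset.prod_range_add]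
      rw [h1, pow_succ]
      apply mul_le_mul ih (hblockprod c) (Finset.prod_nonneg (fun m _ => hfac0 _)) (by positivity)
  -- partial sums up to block starts
  have hS : ∀ c : ℕ, ∑ i ∈ Finset.range (B c), P i ≤ 4 * N * (1 - (3/4 : ℝ) ^ c) := by
    intro c
    induction c with
    | zero =>
      have : B 0 = 0 := by rw [hB]; simp
      rw [this]
      simp
    | succ c ih =>
      rw [hBsucc c, Finset.sum_range_add]
      have h2 : ∑ m ∈ Finset.range (2 ^ c * N), P (B c + m) ≤ (2 ^ c * N : ℝ) * (3/8 : ℝ) ^ c := by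
        calc ∑ m ∈ Finset.range (2 ^ c * N), P (B c + m)
            ≤ ∑ m ∈ Finset.range (2 ^ c * N), (3/8 : ℝ) ^ c := by
              apply Finset.sum_le_sum
              intro m _
              exact le_trans (hPmono (B c) (B c + m) (Nat.le_add_right _ _)) (hPstart c)
          _ = (2 ^ c * N : ℝ) * (3/8 : ℝ) ^ c := by
              rw [Finset.sum_const, Finset.card_range]
              push_cast
              ring
      have key : (2 ^ c * N : ℝ) * (3/8 : ℝ) ^ c = N * (3/4 : ℝ) ^ c := by
        rw [show ((3:ℝ)/4) = 2 * (3/8) by norm_num, mul_pow]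
        ring
      have := add_le_add ih h2
      rw [key] at this
      calc (∑ i ∈ Finset.range (B c), P i) + ∑ m ∈ Finset.range (2 ^ c * N), P (B c + m)
          ≤ 4 * N * (1 - (3/4:ℝ) ^ c) + N * (3/4:ℝ) ^ c := this
        _ = 4 * N * (1 - (3/4:ℝ) ^ (c+1)) := by ring
  -- partial sums bound for every n
  have hbound : ∀ n : ℕ, ∑ i ∈ Finset.range n, P i ≤ 4 * N := by
    intro n
    have hn : n ≤ B n := by
      rw [hB]
      have h1 : n < 2 ^ n := Nat.lt_two_pow_self
      calc n ≤ (2 ^ n - 1) * 1 := by omega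
        _ ≤ (2 ^ n - 1) * N := Nat.mul_le_mul_left _ hN
    have h1 : ∑ i ∈ Finset.range n, P i ≤ ∑ i ∈ Finset.range (B n), P i :=
      Finset.sum_le_sum_of_subset_of_nonneg (Finset.range_subset_range.2 hn)
        (fun i _ _ => hPnonneg i)
    have h2 := hS n
    have h3 : (0:ℝ) ≤ (3/4:ℝ)^n := by positivity
    nlinarith
  constructor
  · exact summable_of_sum_range_le hPnonneg hbound
  · exact Summable.tsum_le_of_sum_range_le (summable_of_sum_range_le hPnonneg hbound) hbound
end
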